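/- Let L be an n×n real symmetric matrix with L·1ₙ = 0, and suppose there is an orthogonal matrix Q with QᵀLQ = diag(0, λ₂, …, λₙ) where λ₂, …, λₙ are distinct and strictly positive. Let i ∈ {1, …, n} be such that every entry of the i-th row of Q is nonzero. If x ∈ ℝⁿ satisfies e_iᵀ·L^d·x = 0 for every integer d ≥ 2, then x ∈ span{1ₙ}, i.e., all coordinates of x are equal. -/
import Mathlib

open Matrix

/-- Moment vanishing: distinct nonzero reals, vanishing power sums for all d ≥ 2
implies all coefficients vanish. -/
lemma moments_zero {ι : Type*} [DecidableEq ι] (μ : ι → ℝ) :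
    ∀ (s : Finset ι) (c : ι → ℝ),
      (∀ j ∈ s, μ j ≠ 0) →
      (∀ j ∈ s, ∀ k ∈ s, j ≠ k → μ j ≠ μ k) →
      (∀ d : ℕ, 2 ≤ d → ∑ j ∈ s, c j * μ j ^ d = 0) →
      ∀ j ∈ s, c j = 0 := by
  intro s
  induction s using Finset.induction_on with
  | empty => intro c _ _ _ j hj; simp at hj
  | @insert a s ha ih =>
    intro c hne hinj hsum j hj
    have key : ∀ k ∈ s, c k * (μ k - μ a) = 0 := by
      apply ih (fun k => c k * (μ k - μ a))
      · intro k hk; exact hne k (Finset.mem_insert_of_mem hk)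
      · intro k hk l hl hkl
        exact hinj k (Finset.mem_insert_of_mem hk) l (Finset.mem_insert_of_mem hl) hkl
      · intro d hd
        have h1 := hsum d hd
        have h2 := hsum (d + 1) (le_trans hd (Nat.le_succ d))
        rw [Finset.sum_insert ha] at h1 h2
        have e : ∀ k, c k * (μ k - μ a) * μ k ^ d
            = c k * μ k ^ (d+1) - μ a * (c k * μ k ^ d) := fun k => by ring
        have : ∑ k ∈ s, c k * (μ k - μ a) * μ k ^ d
            = (c a * μ a ^ (d+1) + ∑ k ∈ s, c k * μ k ^ (d+1))
              - μ a * (c a * μ a ^ d + ∑ k ∈ s, c k * μ k ^ d) := by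
          simp_rw [e]
          rw [Finset.sum_sub_distrib, ← Finset.mul_sum]
          ring
        rw [this, h1, h2]; ring
    rcases Finset.mem_insert.mp hj with heq | hjs
    · -- j = a; use d = 2
      subst heq
      have h1 := hsum 2 le_rfl
      rw [Finset.sum_insert ha] at h1
      have hz : ∀ k ∈ s, c k * μ k ^ 2 = 0 := by
        intro k hk
        have hka : k ≠ j := by rintro rfl; exact ha hk
        have := key k hk
        have hμ : μ k - μ j ≠ 0 := sub_ne_zero.mpr
          (hinj k (Finset.mem_insert_of_mem hk) j (Finset.mem_insert_self j s) hka)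
        have hc : c k = 0 := by
          rcases mul_eq_zero.mp this with h | h
          · exact h
          · exact absurd h hμ
        simp [hc]
      rw [Finset.sum_eq_zero hz, add_zero] at h1
      have hμa : μ j ≠ 0 := hne j (Finset.mem_insert_self j s)
      have := mul_eq_zero.mp h1
      rcases this with h | h
      · exact h
      · exact absurd h (pow_ne_zero 2 hμa)
    · have hja : j ≠ a := by rintro rfl; exact ha hjs
      have := key j hjs
      have hμ : μ j - μ a ≠ 0 := sub_ne_zero.mpr
        (hinj j (Finset.mem_insert_of_mem hjs) a (Finset.mem_insert_self a s) hja)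
      rcases mul_eq_zero.mp this with h | h
      · exact h
      · exact absurd h hμ

/-- Key lemma of Appendix E (eqs. (65)–(69)): if `e_iᵀ L^d x = 0` for all `d ≥ 2`, where
row `i` of the eigenvector matrix `Q` has all entries nonzero and `L` has simple zero
eigenvalue and distinct positive remaining eigenvalues, then `x` is a consensus vector. -/
theorem stmt_9 {n : ℕ} [NeZero n]
    (L Q : Matrix (Fin n) (Fin n) ℝ) (hLsymm : L.IsSymm)
    (hL1 : L.mulVec (fun _ => (1:ℝ)) = 0)
    (hQ : Qᵀ * Q = 1)
    (lam : Fin n → ℝ) (hlam0 : lam 0 = 0)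
    (hlampos : ∀ i : Fin n, i ≠ 0 → 0 < lam i)
    (hlamdist : ∀ i j : Fin n, i ≠ 0 → j ≠ 0 → i ≠ j → lam i ≠ lam j)
    (hdiag : Qᵀ * L * Q = Matrix.diagonal lam)
    (i : Fin n) (hQi : ∀ j, Q i j ≠ 0)
    (x : Fin n → ℝ)
    (hx : ∀ d : ℕ, 2 ≤ d → ((L ^ d).mulVec x) i = 0) :
    ∃ a : ℝ, x = fun _ => a := by
  have hQQ : Q * Qᵀ = 1 := mul_eq_one_comm.mp hQ
  have hL : L = Q * Matrix.diagonal lam * Qᵀ := by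
    calc L = (Q * Qᵀ) * L * (Q * Qᵀ) := by rw [hQQ]; simp [Matrix.mul_assoc]
    _ = Q * (Qᵀ * L * Q) * Qᵀ := by noncomm_ring
    _ = Q * Matrix.diagonal lam * Qᵀ := by rw [hdiag]
  set y : Fin n → ℝ := Qᵀ.mulVec x with hy
  have hLpow : ∀ d : ℕ, L ^ d = Q * Matrix.diagonal (fun j => lam j ^ d) * Qᵀ := by
    intro d
    induction d with
    | zero => simp [hQQ]
    | succ d ihd =>
      rw [pow_succ, ihd, hL]
      calc Q * Matrix.diagonal (fun j => lam j ^ d) * Qᵀ * (Q * Matrix.diagonal lam * Qᵀ)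
          = Q * Matrix.diagonal (fun j => lam j ^ d) * (Qᵀ * Q) * Matrix.diagonal lam * Qᵀ := by
            noncomm_ring
        _ = Q * (Matrix.diagonal (fun j => lam j ^ d) * Matrix.diagonal lam) * Qᵀ := by
            rw [hQ]; noncomm_ring
        _ = Q * Matrix.diagonal (fun j => lam j ^ (d+1)) * Qᵀ := by
            rw [Matrix.diagonal_mul_diagonal]
            have h : (fun j => lam j ^ d * lam j) = fun j => lam j ^ (d+1) := by
              funext j; ring
            rw [h]
  have hmom : ∀ d : ℕ, 2 ≤ d → ∑ j, (Q i j * y j) * lam j ^ d = 0 := by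
    intro d hd
    have h0 := hx d hd
    rw [hLpow d, ← Matrix.mulVec_mulVec, ← Matrix.mulVec_mulVec] at h0
    have hdv : (Matrix.diagonal (fun j => lam j ^ d)).mulVec (Qᵀ.mulVec x)
        = fun j => lam j ^ d * y j := by
      funext j; rw [Matrix.mulVec_diagonal]
    rw [hdv] at h0
    simp only [Matrix.mulVec, dotProduct] at h0
    rw [← h0]
    apply Finset.sum_congr rfl
    intro j _
    ring
  have hkey : ∀ j : Fin n, j ≠ 0 → y j = 0 := by
    intro j hj
    have := moments_zero lam (Finset.univ.erase 0) (fun j => Q i j * y j)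
      (fun k hk => fun h => (Finset.mem_erase.mp hk).1 (by
        by_contra hk0
        exact (hlampos k hk0).ne' h))
      (fun k hk l hl hkl => hlamdist k l (Finset.mem_erase.mp hk).1 (Finset.mem_erase.mp hl).1 hkl)
      (by
        intro d hd
        rw [← hmom d hd]
        rw [← Finset.sum_erase_add _ _ (Finset.mem_univ (0 : Fin n))]
        have : lam 0 ^ d = 0 := by
          rw [hlam0]; exact zero_pow (by omega)
        rw [this, mul_zero, add_zero])
      j (Finset.mem_erase.mpr ⟨hj, Finset.mem_univ j⟩)
    rcases mul_eq_zero.mp this with h | h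
    · exact absurd h (hQi j)
    · exact h
  -- x = Q.mulVec y
  have hxQ : x = Q.mulVec y := by
    rw [hy, Matrix.mulVec_mulVec, hQQ, Matrix.one_mulVec]
  -- eigenvector structure of the all-ones vector
  set u : Fin n → ℝ := Qᵀ.mulVec (fun _ => (1:ℝ)) with hu
  have hDu : (Matrix.diagonal lam).mulVec u = 0 := by
    have h1 : Qᵀ * L = Matrix.diagonal lam * Qᵀ := by
      calc Qᵀ * L = Qᵀ * L * (Q * Qᵀ) := by rw [hQQ]; simp [Matrix.mul_assoc]
        _ = (Qᵀ * L * Q) * Qᵀ := by noncomm_ring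
        _ = Matrix.diagonal lam * Qᵀ := by rw [hdiag]
    have : (Qᵀ * L).mulVec (fun _ => (1:ℝ)) = (Matrix.diagonal lam * Qᵀ).mulVec (fun _ => (1:ℝ)) := by
      rw [h1]
    rwa [← Matrix.mulVec_mulVec, ← Matrix.mulVec_mulVec, hL1, Matrix.mulVec_zero, eq_comm] at this
  have hu0 : ∀ j : Fin n, j ≠ 0 → u j = 0 := by
    intro j hj
    have := congrFun hDu j
    rw [Matrix.mulVec_diagonal] at this
    simp only [Pi.zero_apply] at this
    rcases mul_eq_zero.mp this with h | h
    · exact absurd h (hlampos j hj).ne'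
    · exact h
  have hone : ∀ k : Fin n, Q k 0 * u 0 = 1 := by
    intro k
    have h1 : (fun _ => (1:ℝ)) = Q.mulVec u := by
      rw [hu, Matrix.mulVec_mulVec, hQQ, Matrix.one_mulVec]
    have := congrFun h1 k
    simp only [Matrix.mulVec, dotProduct] at this
    rw [this, Finset.sum_eq_single 0]
    · intro b _ hb; rw [hu0 b hb, mul_zero]
    · intro h; exact absurd (Finset.mem_univ 0) h
  have hu0ne : u 0 ≠ 0 := by
    intro h
    have := hone i
    rw [h, mul_zero] at this
    exact one_ne_zero this.symm
  refine ⟨y 0 / u 0, ?_⟩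
  funext k
  rw [hxQ]
  simp only [Matrix.mulVec, dotProduct]
  rw [Finset.sum_eq_single 0]
  · have := hone k
    field_simp
    calc Q k 0 * y 0 * u 0 = (Q k 0 * u 0) * y 0 := by ring
      _ = y 0 := by rw [this, one_mul]
  · intro b _ hb; rw [hkey b hb, mul_zero]
  · intro h; exact absurd (Finset.mem_univ 0) h
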